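/- Let E be a complex Hilbert space, A : E →L[ℂ] E a positive operator (self-adjoint with re⟪A z, z⟫ ≥ 0 for all z), M : E →L[ℂ] E an orthogonal projection (idempotent and self-adjoint), y ∈ E with M y = y, and η a nonzero real number. Define F : E → E by F(x) = (id − M)(x − η • A x) + y, and let x ∈ E be a fixed point of F. If there exists x† ∈ E with M x† = y and A x† = 0, then A x = 0 and M x = y. -/

import Mathlib

open RCLike
open scoped InnerProductSpace

private lemma pos_apply_eq_zero {E : Type*} [NormedAddCommGroup E]
    [InnerProductSpace ℂ E] [CompleteSpace E] {T : E →L[ℂ] E}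
    (hT : T.IsPositive) {z : E} (h : re ⟪T z, z⟫_ℂ = 0) : T z = 0 := by
  have hsymm := hT.1
  have hc : (0:ℝ) ≤ re ⟪T (T z), T z⟫_ℂ := hT.re_inner_nonneg_left (T z)
  set c : ℝ := re ⟪T (T z), T z⟫_ℂ with hcdef
  set s : ℝ := ‖T z‖ ^ 2 with hs
  have hsnn : (0:ℝ) ≤ s := by positivity
  have hTTz : ⟪T (T z), z⟫_ℂ = ⟪T z, T z⟫_ℂ := hsymm (T z) z
  have key : ∀ t : ℝ, 0 ≤ 2 * t * s + t ^ 2 * c := by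
    intro t
    have h0 : (0:ℝ) ≤ re ⟪T (z + (t : ℂ) • T z), z + (t : ℂ) • T z⟫_ℂ :=
      hT.re_inner_nonneg_left _
    have hexp : T (z + (t : ℂ) • T z) = T z + (t : ℂ) • T (T z) := by
      simp [map_add, map_smul]
    rw [hexp] at h0
    simp only [inner_add_left, inner_add_right, inner_smul_left,
      inner_smul_right, hTTz, Complex.conj_ofReal, Complex.add_re,
      Complex.re_ofReal_mul, mul_add, RCLike.re_to_complex] at h0
    have hre : Complex.re ⟪T z, T z⟫_ℂ = s := by
      rw [hs, ← @inner_self_eq_norm_sq ℂ]; rfl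
    have hT_z_z : Complex.re ⟪T z, z⟫_ℂ = 0 := h
    have hcre : Complex.re ⟪T (T z), T z⟫_ℂ = c := rfl
    rw [hre, hT_z_z, hcre] at h0
    nlinarith [h0]
  by_contra hne
  have hspos : 0 < s := by
    rw [hs]
    exact pow_pos (norm_pos_iff.mpr hne) 2
  have hkey := key (-s / (c + 1))
  have hc1 : (0:ℝ) < c + 1 := by linarith
  have h1 : (-s / (c + 1)) * (c + 1) = -s := by field_simp
  nlinarith [hkey, hspos, hc1, mul_pos hspos hspos]

theorem stmt_8 {E : Type*} [NormedAddCommGroup E] [InnerProductSpace ℂ E]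
    [CompleteSpace E] (A M : E →L[ℂ] E) (y : E)
    (hA : A.IsPositive)
    (hMM : M.comp M = M) (hMsa : IsSelfAdjoint M)
    (hMy : M y = y) (η : ℝ) (hη : η ≠ 0)
    (F : E → E)
    (hF : ∀ x, F x = (ContinuousLinearMap.id ℂ E - M) (x - η • A x) + y)
    (x : E) (hfix : F x = x)
    (hdag : ∃ xdag : E, M xdag = y ∧ A xdag = 0) :
    A x = 0 ∧ M x = y := by
  obtain ⟨xd, hMxd, hAxd⟩ := hdag
  have hfix' : (x - η • A x) - M (x - η • A x) + y = x := by
    have := hfix; rw [hF] at this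
    simpa using this
  have hMidem : ∀ u, M (M u) = M u := fun u =>
    congrFun (congrArg DFunLike.coe hMM) u
  have hMx : M x = y := by
    have h := congrArg M hfix'
    simp only [map_add, map_sub, hMidem, hMy, sub_self, zero_add] at h
    exact h.symm
  have hMAx : M (A x) = A x := by
    have h1 : x - η • A x - (M x - η • M (A x)) + y = x := by
      have : M (x - η • A x) = M x - η • M (A x) := by
        rw [map_sub, ContinuousLinearMap.map_smul_of_tower]
      rw [← this]; exact hfix'
    rw [hMx] at h1
    have h2 : η • M (A x) = η • A x := by
      have h3 := sub_eq_zero.mpr h1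
      have h4 : η • M (A x) - η • A x = 0 := by
        rw [← h3]; abel
      exact sub_eq_zero.mp h4
    exact smul_right_injective E hη h2
  have hMz : M (x - xd) = 0 := by rw [map_sub, hMx, hMxd, sub_self]
  have hAz : A (x - xd) = A x := by rw [map_sub, hAxd, sub_zero]
  have hinner : re ⟪A (x - xd), x - xd⟫_ℂ = 0 := by
    have hadj : ⟪M (A x), x - xd⟫_ℂ = ⟪A x, M (x - xd)⟫_ℂ := by
      rw [← ContinuousLinearMap.adjoint_inner_left,
        ContinuousLinearMap.isSelfAdjoint_iff'.mp hMsa]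
    rw [hAz, ← hMAx, hadj, hMz, inner_zero_right]
    simp
  have hfin := pos_apply_eq_zero hA hinner
  rw [hAz] at hfin
  exact ⟨hfin, hMx⟩
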